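/- The energy tensor of a regular 2-form depends only on its canonical 2-form and energetic index: if U is a unitary 2-form on ℝ⁴, φ, ψ ∈ ℝ, and F := e^φ·(cos ψ · U + sin ψ · (*U)), then the energy tensor T := −(1/2)(F̂∘F̂ + (*F)̂∘(*F)̂) equals −(1/2)·e^{2φ}·(Û∘Û + (*U)̂∘(*U)̂); in particular T does not depend on ψ. Moreover T satisfies the energy condition: η(Tx, x) > 0 for every timelike vector x. -/

import Mathlib

open Matrix Real

/-- Spacetime `ℝ⁴` with the standard basis. -/
abbrev V4 : Type := Fin 4 → ℝ

/-- `4×4` real matrices: components of bilinear forms / endomorphisms of `ℝ⁴`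
in the standard basis `(e₀,e₁,e₂,e₃)`. -/
abbrev Mat4 : Type := Matrix (Fin 4) (Fin 4) ℝ

/-- The Minkowski metric `diag(-1,1,1,1)` (it equals its own inverse). -/
noncomputable def ηm : Mat4 := Matrix.diagonal ![-1, 1, 1, 1]

/-- The Minkowski bilinear form `η(x,y) = -x₀y₀ + x₁y₁ + x₂y₂ + x₃y₃`. -/
noncomputable def ηb (x y : V4) : ℝ := x ⬝ᵥ ηm *ᵥ y

/-- A vector `x` is timelike if `η(x,x) < 0`. -/
noncomputable def Timelike (x : V4) : Prop := ηb x x < 0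

/-- Evaluation of the bilinear form with component matrix `B`:
`B(x,y) = Σ xᵅ B_{αβ} yᵝ`. -/
noncomputable def bil (B : Mat4) (x y : V4) : ℝ := x ⬝ᵥ B *ᵥ y

/-- A 2-form is a skew-symmetric bilinear form. -/
noncomputable def IsTwoForm (B : Mat4) : Prop := Bᵀ = -B

/-- The endomorphism `B̂` associated with the bilinear form `B`, i.e. the unique
endomorphism with `η(B̂x, y) = B(x,y)` for all `x, y`.  (Indeed
`ηb (hat B *ᵥ x) y = bil B x y`.) -/
noncomputable def hat (B : Mat4) : Mat4 := ηm * Bᵀ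

/-- The totally antisymmetric Levi-Civita symbol on four indices, `ε₀₁₂₃ = 1`. -/
noncomputable def lc (a b c d : Fin 4) : ℝ :=
  (((b : ℕ) : ℝ) - ((a : ℕ) : ℝ)) * (((c : ℕ) : ℝ) - ((a : ℕ) : ℝ)) *
    (((d : ℕ) : ℝ) - ((a : ℕ) : ℝ)) * (((c : ℕ) : ℝ) - ((b : ℕ) : ℝ)) *
    (((d : ℕ) : ℝ) - ((b : ℕ) : ℝ)) * (((d : ℕ) : ℝ) - ((c : ℕ) : ℝ)) / 12

/-- The Hodge dual of a 2-form:
`(*F)(e_α,e_β) = (1/2) Σ ε_{αβγδ} η^{γμ} η^{δν} F(e_μ,e_ν)`. -/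
noncomputable def hodge (F : Mat4) : Mat4 :=
  Matrix.of fun α β => (1/2) * ∑ γ, ∑ δ, ∑ μ, ∑ ν, lc α β γ δ * ηm γ μ * ηm δ ν * F μ ν

/-- A unitary 2-form: `tr(Û∘Û) = 2` and `tr(Û∘(*U)̂) = 0`. -/
noncomputable def IsUnitary (U : Mat4) : Prop :=
  IsTwoForm U ∧ (hat U * hat U).trace = 2 ∧ (hat U * hat (hodge U)).trace = 0

/-- An endomorphism `L` is η-self-adjoint if `η(Lx,y) = η(x,Ly)` for all `x, y`. -/
noncomputable def SelfAdj (L : Mat4) : Prop := ∀ x y : V4, ηb (L *ᵥ x) y = ηb x (L *ᵥ y)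

set_option maxHeartbeats 2000000

section Aux

lemma ηm_eq : ηm = !![-1,0,0,0;0,1,0,0;0,0,1,0;0,0,0,1] := by
  ext i j
  fin_cases i <;> fin_cases j <;>
    simp [ηm, Matrix.diagonal, Matrix.vecHead, Matrix.vecTail]

/-- generic skew matrix -/
def Uex (a b c p q r : ℝ) : Mat4 := !![0,a,b,c;-a,0,p,q;-b,-p,0,r;-c,-q,-r,0]
/-- `hat` of a generic skew matrix -/
def Aex (a b c p q r : ℝ) : Mat4 := !![0,a,b,c;a,0,-p,-q;b,p,0,-r;c,q,r,0]

lemma smul_one_ex (k : ℝ) : k • (1:Mat4) = !![k,0,0,0;0,k,0,0;0,0,k,0;0,0,0,k] := by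
  ext i j
  fin_cases i <;> fin_cases j <;>
    simp [Matrix.one_apply, Matrix.vecHead, Matrix.vecTail]

lemma hodge_entry (F : Mat4) (α β : Fin 4) :
    hodge F α β = (1/2) * ∑ γ, ∑ δ, lc α β γ δ * (ηm γ γ * ηm δ δ * F γ δ) := by
  rw [hodge]
  simp only [Matrix.of_apply]
  congr 1
  refine Finset.sum_congr rfl fun γ _ => Finset.sum_congr rfl fun δ _ => ?_
  rw [Finset.sum_eq_single γ, Finset.sum_eq_single δ]
  · ring
  · intro ν _ hν; simp [ηm, Matrix.diagonal_apply_ne' _ hν]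
  · simp
  · intro μ _ hμ
    rw [Finset.sum_eq_single δ]
    · simp [ηm, Matrix.diagonal_apply_ne' _ hμ]
    · intro ν _ hν; simp [ηm, Matrix.diagonal_apply_ne' _ hν]
    · simp
  · simp

lemma fv0 : ((0:Fin 4):ℕ) = 0 := rfl
lemma fv1 : ((1:Fin 4):ℕ) = 1 := rfl
lemma fv2 : ((2:Fin 4):ℕ) = 2 := rfl
lemma fv3 : ((3:Fin 4):ℕ) = 3 := rfl

lemma hodge_Uex (a b c p q r : ℝ) :
    hodge (Uex a b c p q r) = Uex r (-q) p (-c) b (-a) := by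
  ext i j
  fin_cases i <;> fin_cases j <;>
    rw [hodge_entry] <;>
    simp [lc, ηm, Uex, Fin.sum_univ_four, Matrix.diagonal, fv0, fv1, fv2, fv3] <;> norm_num <;>
    ring

lemma neg_Uex (a b c p q r : ℝ) :
    Uex (-a) (-b) (-c) (-p) (-q) (-r) = -(Uex a b c p q r) := by
  ext i j
  fin_cases i <;> fin_cases j <;>
    simp [Uex, Matrix.neg_apply, Matrix.vecHead, Matrix.vecTail]

lemma hat_Uex (a b c p q r : ℝ) : hat (Uex a b c p q r) = Aex a b c p q r := by
  ext i j
  fin_cases i <;> fin_cases j <;>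
    simp [hat, ηm_eq, Uex, Aex, Matrix.mul_apply, Fin.sum_univ_four,
      Matrix.transpose_apply, Matrix.vecHead, Matrix.vecTail]

lemma hat_smul (t : ℝ) (M : Mat4) : hat (t • M) = t • hat M := by
  rw [hat, Matrix.transpose_smul, Matrix.mul_smul, hat]

lemma hat_add (M N : Mat4) : hat (M + N) = hat M + hat N := by
  rw [hat, Matrix.transpose_add, Matrix.mul_add, hat, hat]

lemma hat_neg (M : Mat4) : hat (-M) = -hat M := by
  rw [hat, Matrix.transpose_neg, Matrix.mul_neg, hat]

lemma hodge_smul (t : ℝ) (M : Mat4) : hodge (t • M) = t • hodge M := by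
  ext α β
  rw [Matrix.smul_apply, hodge_entry, hodge_entry]
  simp [Fin.sum_univ_four, Matrix.smul_apply]
  ring

lemma hodge_add (M N : Mat4) : hodge (M + N) = hodge M + hodge N := by
  ext α β
  rw [Matrix.add_apply, hodge_entry, hodge_entry, hodge_entry]
  simp [Fin.sum_univ_four, Matrix.add_apply]
  ring

lemma ηb_expand (u v : V4) :
    ηb u v = -(u 0 * v 0) + u 1 * v 1 + u 2 * v 2 + u 3 * v 3 := by
  simp [ηb, ηm_eq, Matrix.mulVec, dotProduct, Fin.sum_univ_four,
    Matrix.vecHead, Matrix.vecTail]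

lemma skew_repr (U : Mat4) (h : Uᵀ = -U) :
    U = Uex (U 0 1) (U 0 2) (U 0 3) (U 1 2) (U 1 3) (U 2 3) := by
  have h' : ∀ i j, U j i = -U i j := fun i j => by
    have := congrFun (congrFun h i) j
    simpa [Matrix.transpose_apply] using this
  ext i j
  fin_cases i <;> fin_cases j <;>
    simp [Uex, Matrix.vecHead, Matrix.vecTail] <;>
    first
      | linarith [h' 0 0] | linarith [h' 1 1] | linarith [h' 2 2]
      | linarith [h' 3 3] | linarith [h' 0 1] | linarith [h' 0 2]
      | linarith [h' 0 3] | linarith [h' 1 2] | linarith [h' 1 3]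
      | linarith [h' 2 3]

lemma expand_sq (e cc ss : ℝ) (A B : Mat4) :
    (e • (cc • A + ss • B)) * (e • (cc • A + ss • B))
      + (e • (cc • B + ss • (-A))) * (e • (cc • B + ss • (-A)))
      = ((cc^2 + ss^2) * (e*e)) • (A*A + B*B) := by
  simp only [smul_add, smul_neg, smul_smul, add_mul, mul_add, neg_mul, mul_neg,
    Matrix.smul_mul, Matrix.mul_smul, neg_neg]
  module

lemma ABz (a b c p q r : ℝ) :
    Aex a b c p q r * Aex r (-q) p (-c) b (-a) = (a*r - b*q + c*p) • (1 : Mat4) := by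
  rw [smul_one_ex]
  ext i j
  fin_cases i <;> fin_cases j <;>
    simp [Aex, Matrix.mul_apply, Fin.sum_univ_four, Matrix.vecHead,
      Matrix.vecTail] <;> ring

lemma BAz (a b c p q r : ℝ) :
    Aex r (-q) p (-c) b (-a) * Aex a b c p q r = (a*r - b*q + c*p) • (1 : Mat4) := by
  rw [smul_one_ex]
  ext i j
  fin_cases i <;> fin_cases j <;>
    simp [Aex, Matrix.mul_apply, Fin.sum_univ_four, Matrix.vecHead,
      Matrix.vecTail] <;> ring

lemma AAsubBB (a b c p q r : ℝ) :
    Aex a b c p q r * Aex a b c p q r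
      = Aex r (-q) p (-c) b (-a) * Aex r (-q) p (-c) b (-a)
        + (a^2+b^2+c^2-p^2-q^2-r^2) • (1 : Mat4) := by
  rw [smul_one_ex]
  ext i j
  fin_cases i <;> fin_cases j <;>
    simp [Aex, Matrix.mul_apply, Matrix.add_apply, Fin.sum_univ_four,
      Matrix.vecHead, Matrix.vecTail] <;> ring

lemma trAA (a b c p q r : ℝ) :
    (Aex a b c p q r * Aex a b c p q r).trace = 2*(a^2+b^2+c^2-p^2-q^2-r^2) := by
  simp [Aex, Matrix.trace, Matrix.diag, Matrix.mul_apply, Fin.sum_univ_four,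
    Matrix.vecHead, Matrix.vecTail]
  ring

lemma orthA (a b c p q r : ℝ) (x : V4) : ηb x (Aex a b c p q r *ᵥ x) = 0 := by
  simp [ηb_expand, Aex, Matrix.mulVec, dotProduct, Fin.sum_univ_four,
    Matrix.vecHead, Matrix.vecTail]
  ring

lemma skew_dot (a b c p q r : ℝ) (x : V4) :
    ηb ((Aex a b c p q r * Aex a b c p q r) *ᵥ x) x
      = - ηb (Aex a b c p q r *ᵥ x) (Aex a b c p q r *ᵥ x) := by
  simp [ηb_expand, Aex, Matrix.mulVec, dotProduct, Matrix.mul_apply,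
    Fin.sum_univ_four, Matrix.vecHead, Matrix.vecTail]
  ring

lemma sadjA (a b c p q r : ℝ) :
    (Aex a b c p q r)ᵀ * ηm = -(ηm * Aex a b c p q r) := by
  ext i j
  fin_cases i <;> fin_cases j <;>
    simp [Aex, ηm_eq, Matrix.mul_apply, Fin.sum_univ_four, Matrix.neg_apply,
      Matrix.transpose_apply, Matrix.vecHead, Matrix.vecTail]

lemma dot_adj (W : Mat4) (h : Wᵀ * ηm = ηm * W) (x : V4) :
    ηb (W *ᵥ x) (W *ᵥ x) = ηb ((W * W) *ᵥ x) x := by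
  rw [ηb, ηb, Matrix.mulVec_mulVec, ← h, ← Matrix.mulVec_mulVec,
    Matrix.dotProduct_mulVec, Matrix.vecMul_transpose, Matrix.mulVec_mulVec]

lemma ηb_smul_left (k : ℝ) (u w : V4) : ηb (k • u) w = k * ηb u w := by
  simp [ηb_expand]; ring

lemma ηb_smul_right (k : ℝ) (u w : V4) : ηb u (k • w) = k * ηb u w := by
  simp [ηb_expand]; ring

lemma ηb_add_left (u v w : V4) : ηb (u + v) w = ηb u w + ηb v w := by
  simp [ηb_expand]; ring

lemma ortho_nonneg (x v : V4) (hx : ηb x x < 0) (h : ηb x v = 0) :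
    0 ≤ ηb v v := by
  rw [ηb_expand] at hx h ⊢
  set x0 := x 0; set x1 := x 1; set x2 := x 2; set x3 := x 3
  set v0 := v 0; set v1 := v 1; set v2 := v 2; set v3 := v 3
  have hS : (0:ℝ) ≤ v1*v1 + v2*v2 + v3*v3 := by nlinarith [mul_self_nonneg v1, mul_self_nonneg v2, mul_self_nonneg v3]
  have hx' : (0:ℝ) < x0*x0 - (x1*x1 + x2*x2 + x3*x3) := by linarith
  have h1 : (x1*v1 + x2*v2 + x3*v3)^2
      ≤ (x1*x1 + x2*x2 + x3*x3) * (v1*v1 + v2*v2 + v3*v3) := by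
    nlinarith [sq_nonneg (x1*v2 - x2*v1), sq_nonneg (x1*v3 - x3*v1),
      sq_nonneg (x2*v3 - x3*v2)]
  have h2 : x0*v0 = x1*v1 + x2*v2 + x3*v3 := by linarith
  have h3 : (x0*v0)^2 = (x1*v1 + x2*v2 + x3*v3)^2 := by rw [h2]
  have key : 0 ≤ (x0*x0) * (-(v0*v0) + v1*v1 + v2*v2 + v3*v3) := by
    nlinarith [h1, h3, mul_nonneg hx'.le hS]
  have hx0 : (0:ℝ) < x0*x0 := by nlinarith [sq_nonneg x1, sq_nonneg x2, sq_nonneg x3]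
  nlinarith [key, hx0]

lemma revCS (u x : V4) (hu : ηb u u < 0) (hx : ηb x x < 0) : ηb u x ≠ 0 := by
  rw [ηb_expand] at hu hx
  rw [ηb_expand]
  intro h
  set u0 := u 0; set u1 := u 1; set u2 := u 2; set u3 := u 3
  set x0 := x 0; set x1 := x 1; set x2 := x 2; set x3 := x 3
  have h1 : (u1*x1 + u2*x2 + u3*x3)^2
      ≤ (u1*u1 + u2*u2 + u3*u3) * (x1*x1 + x2*x2 + x3*x3) := by
    nlinarith [sq_nonneg (u1*x2 - u2*x1), sq_nonneg (u1*x3 - u3*x1),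
      sq_nonneg (u2*x3 - u3*x2)]
  have h2 : u0*x0 = u1*x1 + u2*x2 + u3*x3 := by linarith
  have h3 : (u0*x0)^2 = (u1*x1 + u2*x2 + u3*x3)^2 := by rw [h2]
  have hu2 : (0:ℝ) ≤ u1*u1 + u2*u2 + u3*u3 := by nlinarith [mul_self_nonneg u1, mul_self_nonneg u2, mul_self_nonneg u3]
  have hx2 : (0:ℝ) ≤ x1*x1 + x2*x2 + x3*x3 := by nlinarith [mul_self_nonneg x1, mul_self_nonneg x2, mul_self_nonneg x3]
  have hlt : (u1*u1 + u2*u2 + u3*u3) * (x1*x1 + x2*x2 + x3*x3)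
      < (u0*u0) * (x0*x0) :=
    mul_lt_mul'' (by linarith) (by linarith) hu2 hx2
  nlinarith [h1, h3, hlt]

end Aux

/-- The energy tensor of a regular 2-form depends only on its canonical 2-form
and energetic index: `T = -(1/2)e^{2φ}(Û∘Û + (*U)̂∘(*U)̂)` (no dependence on ψ),
and it satisfies the energy condition `η(Tx,x) > 0` for timelike `x`. -/
theorem stmt6 (U : Mat4) (hU : IsUnitary U) (φ ψ : ℝ) (F T : Mat4)
    (hF : F = Real.exp φ • (Real.cos ψ • U + Real.sin ψ • hodge U))
    (hT : T = (-(1/2) : ℝ) • (hat F * hat F + hat (hodge F) * hat (hodge F))) :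
    T = (-(1/2) * Real.exp (2*φ)) •
        (hat U * hat U + hat (hodge U) * hat (hodge U)) ∧
    ∀ x : V4, Timelike x → 0 < ηb (T *ᵥ x) x := by
  obtain ⟨hskew, htr1, htr2⟩ := hU
  obtain ⟨a, b, c, p, q, r, hrep⟩ :
      ∃ a b c p q r, U = Uex a b c p q r :=
    ⟨_, _, _, _, _, _, skew_repr U hskew⟩
  subst hrep
  set A := Aex a b c p q r with hA
  set B := Aex r (-q) p (-c) b (-a) with hB
  have hodU : hodge (Uex a b c p q r) = Uex r (-q) p (-c) b (-a) := hodge_Uex a b c p q r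
  have hodV : hodge (Uex r (-q) p (-c) b (-a)) = -(Uex a b c p q r) := by
    rw [hodge_Uex]
    simpa using neg_Uex a b c p q r
  have hatU : hat (Uex a b c p q r) = A := hat_Uex a b c p q r
  have hatV : hat (Uex r (-q) p (-c) b (-a)) = B := hat_Uex r (-q) p (-c) b (-a)
  -- the trace conditions
  rw [hatU, trAA] at htr1
  have hK : a^2+b^2+c^2-p^2-q^2-r^2 = 1 := by linarith
  rw [hodU, hatU, hatV, hA, hB, ABz, Matrix.trace_smul, Matrix.trace_one] at htr2
  have hL : a*r - b*q + c*p = 0 := by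
    simp at htr2
    linarith [htr2]
  -- hats of F and its dual
  have hatF : hat F = Real.exp φ • (Real.cos ψ • A + Real.sin ψ • B) := by
    rw [hF, hat_smul, hat_add, hat_smul, hat_smul, hatU, hodU, hatV]
  have hodF : hodge F
      = Real.exp φ • (Real.cos ψ • Uex r (-q) p (-c) b (-a)
          + Real.sin ψ • (-(Uex a b c p q r))) := by
    rw [hF, hodge_smul, hodge_add, hodge_smul, hodge_smul, hodU, hodV]
  have hatG : hat (hodge F) = Real.exp φ • (Real.cos ψ • B + Real.sin ψ • (-A)) := by
    rw [hodF, hat_smul, hat_add, hat_smul, hat_smul, hatV, hat_neg, hatU]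
  -- Part 1
  have part1 : T = (-(1/2) * Real.exp (2*φ)) • (A*A + B*B) := by
    rw [hT, hatF, hatG, expand_sq, Real.cos_sq_add_sin_sq, smul_smul]
    congr 1
    rw [two_mul, Real.exp_add]
    ring
  constructor
  · rw [part1, hatU, hodU, hatV]
  -- Part 2
  intro x hx
  have hx' : ηb x x < 0 := hx
  have he2 : 0 < Real.exp (2*φ) := Real.exp_pos _
  -- matrix algebra
  have hAB : A * B = 0 := by rw [hA, hB, ABz, hL, zero_smul]
  have hBA : B * A = 0 := by rw [hA, hB, BAz, hL, zero_smul]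
  have hAA : A * A = B * B + 1 := by
    rw [hA, hB, AAsubBB, hK, one_smul]
  have h1 : (A*A)*(B*B) = 0 := by
    calc (A*A)*(B*B) = A*(A*B)*B := by noncomm_ring
      _ = 0 := by rw [hAB]; noncomm_ring
  have h2 : (B*B)*(A*A) = 0 := by
    calc (B*B)*(A*A) = B*(B*A)*A := by noncomm_ring
      _ = 0 := by rw [hBA]; noncomm_ring
  have h3 : (A*A)*(A*A) = A*A := by
    calc (A*A)*(A*A) = (A*A)*(B*B) + (A*A)*1 := by rw [← mul_add, ← hAA]
      _ = A*A := by rw [h1]; noncomm_ring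
  have h4 : (B*B)*(B*B) = -(B*B) := by
    have : (B*B)*(B*B) = (B*B)*(A*A) - (B*B)*1 := by
      rw [← mul_sub]
      congr 1
      rw [hAA]; noncomm_ring
    rw [this, h2]; noncomm_ring
  have hWW : (A*A + B*B) * (A*A + B*B) = 1 := by
    calc (A*A + B*B) * (A*A + B*B)
        = (A*A)*(A*A) + (A*A)*(B*B) + ((B*B)*(A*A) + (B*B)*(B*B)) := by noncomm_ring
      _ = 1 := by rw [h1, h2, h3, h4, hAA]; abel
  have hsadj : (A*A + B*B)ᵀ * ηm = ηm * (A*A + B*B) := by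
    have hA' := sadjA a b c p q r
    have hB' := sadjA r (-q) p (-c) b (-a)
    rw [← hA] at hA'
    rw [← hB] at hB'
    calc (A*A + B*B)ᵀ * ηm = Aᵀ*(Aᵀ*ηm) + Bᵀ*(Bᵀ*ηm) := by
          rw [Matrix.transpose_add, Matrix.transpose_mul, Matrix.transpose_mul]
          noncomm_ring
      _ = Aᵀ*(-(ηm*A)) + Bᵀ*(-(ηm*B)) := by rw [hA', hB']
      _ = -((Aᵀ*ηm)*A) + -((Bᵀ*ηm)*B) := by noncomm_ring
      _ = -((-(ηm*A))*A) + -((-(ηm*B))*B) := by rw [hA', hB']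
      _ = ηm * (A*A + B*B) := by noncomm_ring
  -- the value of η(Tx,x)
  have hTx : T *ᵥ x = (-(1/2) * Real.exp (2*φ)) • ((A*A + B*B) *ᵥ x) := by
    rw [part1, Matrix.smul_mulVec]
  have hval : ηb (T *ᵥ x) x
      = (Real.exp (2*φ)/2) * (ηb (A *ᵥ x) (A *ᵥ x) + ηb (B *ᵥ x) (B *ᵥ x)) := by
    rw [hTx, ηb_smul_left, Matrix.add_mulVec, ηb_add_left]
    rw [show (A*A) *ᵥ x = (A*A) *ᵥ x from rfl]
    have e1 : ηb ((A*A) *ᵥ x) x = - ηb (A *ᵥ x) (A *ᵥ x) := by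
      rw [hA]; exact skew_dot a b c p q r x
    have e2 : ηb ((B*B) *ᵥ x) x = - ηb (B *ᵥ x) (B *ᵥ x) := by
      rw [hB]; exact skew_dot r (-q) p (-c) b (-a) x
    rw [e1, e2]
    ring
  -- nonnegativity
  have hu0 : 0 ≤ ηb (A *ᵥ x) (A *ᵥ x) :=
    ortho_nonneg x _ hx' (by rw [hA]; exact orthA a b c p q r x)
  have hv0 : 0 ≤ ηb (B *ᵥ x) (B *ᵥ x) :=
    ortho_nonneg x _ hx' (by rw [hB]; exact orthA r (-q) p (-c) b (-a) x)
  have hge : 0 ≤ ηb (T *ᵥ x) x := by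
    rw [hval]
    have := he2.le
    positivity
  -- strictness via reverse Cauchy-Schwarz
  have hWx : ηb ((A*A + B*B) *ᵥ x) ((A*A + B*B) *ᵥ x) = ηb x x := by
    rw [dot_adj _ hsadj, hWW, Matrix.one_mulVec]
  have hTT : ηb (T *ᵥ x) (T *ᵥ x) < 0 := by
    rw [hTx, ηb_smul_left, ηb_smul_right, hWx]
    have : (0:ℝ) < Real.exp (2*φ) * Real.exp (2*φ) := by positivity
    nlinarith [hx', this]
  have hne : ηb (T *ᵥ x) x ≠ 0 := revCS _ _ hTT hx'
  exact lt_of_le_of_ne hge (Ne.symm hne)
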